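/- In the noisy-pair model with class transition matrix T (size c×c, c ≥ 2), the conditional probability that the noisy similarity label equals 0 given that the clean similarity label equals 1 satisfies T_{s,10} := P(H̄ = 0 | H = 1) = (c − ‖T‖_Fro²) / c, where ‖T‖_Fro² = Σ_{i,j} T_{ij}². -/

import Mathlib

/- The probability of an event `A` (on quadruples `(i₁, j₁, i₂, j₂)` of clean/noisy class
labels for two independent points) in the noisy-pair model with class transition matrix `T`
and uniform class priors: each quadruple has probability `(1/c²) · T i₁ j₁ · T i₂ j₂`. -/
open Classical in
noncomputable def noisyPairProb (c : ℕ) (T : Matrix (Fin c) (Fin c) ℝ)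
    (A : Fin c → Fin c → Fin c → Fin c → Prop) : ℝ :=
  ∑ i₁ : Fin c, ∑ j₁ : Fin c, ∑ i₂ : Fin c, ∑ j₂ : Fin c,
    if A i₁ j₁ i₂ j₂ then (1 / (c : ℝ) ^ 2) * T i₁ j₁ * T i₂ j₂ else 0

/-- In the noisy-pair model, `T_{s,10} = P(H̄ = 0 | H = 1) = (c − ‖T‖_Fro²) / c`. -/
theorem Ts10_eq (c : ℕ) (hc : 2 ≤ c) (T : Matrix (Fin c) (Fin c) ℝ)
    (hpos : ∀ i j, 0 ≤ T i j) (hrow : ∀ i, ∑ j, T i j = 1) :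
    noisyPairProb c T (fun i₁ j₁ i₂ j₂ => i₁ = i₂ ∧ j₁ ≠ j₂) /
        noisyPairProb c T (fun i₁ _ i₂ _ => i₁ = i₂) =
      ((c : ℝ) - ∑ i, ∑ j, (T i j) ^ 2) / (c : ℝ) := by
  classical
  have hc0 : (c : ℝ) ≠ 0 := by
    have : 0 < c := by omega
    exact_mod_cast this.ne'
  have hden : noisyPairProb c T (fun i₁ _ i₂ _ => i₁ = i₂) = 1 / c := by
    unfold noisyPairProb
    beta_reduce
    trans (∑ i₁ : Fin c, ∑ j₁ : Fin c, (1 / (c : ℝ) ^ 2) * T i₁ j₁)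
    · refine Finset.sum_congr rfl fun i₁ _ => Finset.sum_congr rfl fun j₁ _ => ?_
      rw [Finset.sum_eq_single i₁]
      · simp only [eq_self_iff_true, if_true]
        rw [← Finset.mul_sum, hrow i₁, mul_one]
      · intro b _ hb
        simp [(Ne.symm hb : ¬ i₁ = b)]
      · simp
    · have h2 : ∀ i₁ : Fin c, (∑ j₁ : Fin c, (1 / (c : ℝ) ^ 2) * T i₁ j₁)
          = 1 / (c : ℝ) ^ 2 := by
        intro i₁; rw [← Finset.mul_sum, hrow i₁, mul_one]
      rw [Finset.sum_congr rfl (fun i₁ _ => h2 i₁), Finset.sum_const, Finset.card_univ,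
        Fintype.card_fin, nsmul_eq_mul]
      field_simp
  have hnum : noisyPairProb c T (fun i₁ j₁ i₂ j₂ => i₁ = i₂ ∧ j₁ ≠ j₂)
      = (1 / (c : ℝ) ^ 2) * ((c : ℝ) - ∑ i, ∑ j, (T i j) ^ 2) := by
    unfold noisyPairProb
    beta_reduce
    trans (∑ i₁ : Fin c, ∑ j₁ : Fin c, (1 / (c : ℝ) ^ 2) * T i₁ j₁ * (1 - T i₁ j₁))
    · refine Finset.sum_congr rfl fun i₁ _ => Finset.sum_congr rfl fun j₁ _ => ?_
      rw [Finset.sum_eq_single i₁]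
      · trans (∑ j₂ : Fin c, ((1 / (c : ℝ) ^ 2) * T i₁ j₁ * T i₁ j₂
            - if j₁ = j₂ then (1 / (c : ℝ) ^ 2) * T i₁ j₁ * T i₁ j₂ else 0))
        · refine Finset.sum_congr rfl fun j₂ _ => ?_
          by_cases h : j₁ = j₂ <;> simp [h]
        · rw [Finset.sum_sub_distrib, ← Finset.mul_sum, hrow i₁,
            Finset.sum_ite_eq, if_pos (Finset.mem_univ _)]
          ring
      · intro b _ hb
        simp [(Ne.symm hb : ¬ i₁ = b)]
      · simp
    · have h2 : ∀ i : Fin c, (∑ j : Fin c, (1 / (c : ℝ) ^ 2) * T i j * (1 - T i j))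
          = (1 / (c : ℝ) ^ 2) * (1 - ∑ j, (T i j) ^ 2) := by
        intro i
        rw [show (1 / (c : ℝ) ^ 2) * (1 - ∑ j, (T i j) ^ 2)
            = (1 / (c : ℝ) ^ 2) * (∑ j, T i j) - (1 / (c : ℝ) ^ 2) * ∑ j, (T i j) ^ 2 from by
          rw [hrow i]; ring]
        rw [Finset.mul_sum, Finset.mul_sum, ← Finset.sum_sub_distrib]
        exact Finset.sum_congr rfl fun j _ => by ring
      rw [Finset.sum_congr rfl (fun i _ => h2 i), ← Finset.mul_sum,
        Finset.sum_sub_distrib, Finset.sum_const, Finset.card_univ, Fintype.card_fin,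
        nsmul_eq_mul, mul_one]
  rw [hnum, hden]
  field_simp
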